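/- Bound on the size of the core (Theorem 1(vi)): if ε > 0, x_i^0 ≥ 0 for every vertex i, and ∑_{i∈V} x_i^0 = 1, then for every time t the number of core vertices satisfies ε · |{i ∈ V : x_i^t > ε}| < 1, i.e. the core has fewer than 1/ε vertices. -/
import Mathlib

private lemma neighbor_sum_swap
    {V : Type*} [Fintype V] [DecidableEq V]
    (G : SimpleGraph V) [DecidableRel G.Adj] (f : V → ℝ) :
    ∑ i, ∑ j ∈ G.neighborFinset i, f j = ∑ j, (G.degree j : ℝ) * f j := by
  calc ∑ i, ∑ j ∈ G.neighborFinset i, f j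
      = ∑ i, ∑ j, if G.Adj i j then f j else 0 := by
        apply Finset.sum_congr rfl; intro i _
        rw [← Finset.sum_filter]
        apply Finset.sum_congr _ (fun _ _ => rfl)
        ext j; simp [SimpleGraph.mem_neighborFinset]
    _ = ∑ j, ∑ i, if G.Adj i j then f j else 0 := Finset.sum_comm
    _ = ∑ j, (G.degree j : ℝ) * f j := by
        apply Finset.sum_congr rfl; intro j _
        rw [← Finset.sum_filter]
        have hfe : Finset.univ.filter (fun i => G.Adj i j) = G.neighborFinset j := by
          ext i; simp [SimpleGraph.mem_neighborFinset, SimpleGraph.adj_comm]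
        rw [hfe, Finset.sum_const, SimpleGraph.card_neighborFinset_eq_degree,
          nsmul_eq_mul]

/-- **Bound on the size of the core (Theorem 1(vi)).** If `ε > 0`, initial charges are
nonnegative and sum to `1`, then at every time `t` the core `{i : x_i^t > ε}` satisfies
`ε · |core| < 1`, i.e. it has fewer than `1/ε` vertices. -/
theorem core_size_bound
    {V : Type*} [Fintype V] [DecidableEq V]
    (G : SimpleGraph V) [DecidableRel G.Adj]
    (hdeg : ∀ i : V, 0 < G.degree i)
    (ε : ℝ) (x : ℕ → V → ℝ)
    (hupd : ∀ (t : ℕ) (i : V),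
      x (t + 1) i =
        (ε + (x t i - ε) / 2) * (if ε < x t i then (1 : ℝ) else 0)
          + x t i * (1 - (if ε < x t i then (1 : ℝ) else 0))
          + (1 / 2) * ∑ j ∈ G.neighborFinset i,
              (if ε < x t j then (1 : ℝ) else 0) * (x t j - ε) / (G.degree j))
    (hε : 0 < ε) (hnn : ∀ i : V, 0 ≤ x 0 i) (hsum : ∑ i, x 0 i = 1) :
    ∀ t : ℕ, ε * ((Finset.univ.filter (fun i : V => ε < x t i)).card : ℝ) < 1 := by
  -- Invariant: charges are nonnegative and sum to 1 at every time.
  have key : ∀ t : ℕ, (∀ i, 0 ≤ x t i) ∧ ∑ i, x t i = 1 := by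
    intro t
    induction t with
    | zero => exact ⟨hnn, hsum⟩
    | succ t ih =>
      obtain ⟨hn, hs⟩ := ih
      constructor
      · intro i
        rw [hupd t i]
        have hsum0 : 0 ≤ ∑ j ∈ G.neighborFinset i,
            (if ε < x t j then (1 : ℝ) else 0) * (x t j - ε) / (G.degree j) := by
          apply Finset.sum_nonneg
          intro j _
          split_ifs with h
          · rw [one_mul]
            exact div_nonneg (by linarith) (Nat.cast_nonneg _)
          · simp
        have := hn i
        split_ifs with h
        · nlinarith
        · nlinarith [hε]
      · have hrw : ∑ i, x (t + 1) i
            = ∑ i, ((ε + (x t i - ε) / 2) * (if ε < x t i then (1 : ℝ) else 0)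
              + x t i * (1 - (if ε < x t i then (1 : ℝ) else 0)))
              + (1 / 2) * ∑ i, ∑ j ∈ G.neighborFinset i,
                (if ε < x t j then (1 : ℝ) else 0) * (x t j - ε) / (G.degree j) := by
          rw [Finset.sum_congr rfl (fun i _ => hupd t i),
            Finset.sum_add_distrib, ← Finset.mul_sum]
        rw [hrw, neighbor_sum_swap]
        have hterm : ∀ j : V, (G.degree j : ℝ) *
            ((if ε < x t j then (1 : ℝ) else 0) * (x t j - ε) / (G.degree j))
            = (if ε < x t j then (1 : ℝ) else 0) * (x t j - ε) := by
          intro j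
          have hd : (G.degree j : ℝ) ≠ 0 := by
            exact_mod_cast (hdeg j).ne'
          split_ifs with hj
          · field_simp
          · simp
        rw [Finset.sum_congr rfl (fun j _ => hterm j), Finset.mul_sum,
          ← Finset.sum_add_distrib]
        have heq : ∑ i, (((ε + (x t i - ε) / 2) * (if ε < x t i then (1 : ℝ) else 0)
              + x t i * (1 - (if ε < x t i then (1 : ℝ) else 0)))
              + 1 / 2 * ((if ε < x t i then (1 : ℝ) else 0) * (x t i - ε)))
            = ∑ i, x t i := by
          apply Finset.sum_congr rfl
          intro i _
          split_ifs with h <;> ring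
        rw [heq, hs]
  intro t
  obtain ⟨hn, hs⟩ := key t
  set S := Finset.univ.filter (fun i : V => ε < x t i) with hS
  rcases S.eq_empty_or_nonempty with h | h
  · simp [h]
  · have h1 : ε * (S.card : ℝ) < ∑ i ∈ S, x t i := by
      have h0 := Finset.sum_lt_sum_of_nonempty h
        (f := fun _ => ε) (g := fun i => x t i)
        (fun i hi => (Finset.mem_filter.mp hi).2)
      simp only [Finset.sum_const, nsmul_eq_mul] at h0
      linarith
    have h2 : ∑ i ∈ S, x t i ≤ 1 := by
      rw [← hs]
      exact Finset.sum_le_sum_of_subset_of_nonneg (Finset.subset_univ S)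
        (fun i _ _ => hn i)
    linarith
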